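/- For every real x ≥ 1, (1/2) ∑_{n ≤ 4x} (−1)^n d(n) = x(log x + 2γ − 1) + Δ*(x), where the sum is over positive integers n ≤ 4x and Δ*(x) = −Δ(x) + 2Δ(2x) − (1/2)Δ(4x). (Arithmetic interpretation of Δ*.) -/

import Mathlib

/-- The error term in the Dirichlet divisor problem:
`Δ(x) = ∑_{n ≤ x} d(n) − x(log x + 2γ − 1)`. -/
noncomputable def divisorError (x : ℝ) : ℝ :=
  (∑ n ∈ Finset.Icc 1 ⌊x⌋₊, ((Nat.divisors n).card : ℝ)) -
    x * (Real.log x + 2 * Real.eulerMascheroniConstant - 1)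

/-- `Δ*(x) = −Δ(x) + 2Δ(2x) − (1/2)Δ(4x)`. -/
noncomputable def divisorErrorStar (x : ℝ) : ℝ :=
  -divisorError x + 2 * divisorError (2 * x) - (1 / 2) * divisorError (4 * x)

/-- Real-valued divisor-counting function. -/
noncomputable def dd (n : ℕ) : ℝ := ((Nat.divisors n).card : ℝ)

/-- Even divisors of `2m` correspond to divisors of `m` via doubling. -/
lemma evenDiv (m : ℕ) (hm : m ≠ 0) :
    (Nat.divisors (2*m)).filter (fun e => 2 ∣ e) = (Nat.divisors m).image (fun f => 2*f) := by
  ext e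
  simp only [Finset.mem_filter, Nat.mem_divisors, Finset.mem_image]
  constructor
  · rintro ⟨⟨hd, h0⟩, f, rfl⟩
    exact ⟨f, ⟨(mul_dvd_mul_iff_left (by norm_num : (2:ℕ) ≠ 0)).mp hd, hm⟩, rfl⟩
  · rintro ⟨f, ⟨hf, _⟩, rfl⟩
    exact ⟨⟨mul_dvd_mul_left 2 hf, by positivity⟩, f, rfl⟩

lemma evenDivCard (m : ℕ) (hm : m ≠ 0) :
    ((Nat.divisors (2*m)).filter (fun e => 2 ∣ e)).card = (Nat.divisors m).card := by
  rw [evenDiv m hm, Finset.card_image_of_injective _ (mul_right_injective₀ (by norm_num))]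

/-- Odd divisors of `2m` are exactly the odd divisors of `m`. -/
lemma oddDiv (m : ℕ) (hm : m ≠ 0) :
    (Nat.divisors (2*m)).filter (fun e => ¬ 2 ∣ e) = (Nat.divisors m).filter (fun e => ¬ 2 ∣ e) := by
  ext e
  simp only [Finset.mem_filter, Nat.mem_divisors]
  constructor
  · rintro ⟨⟨hd, h0⟩, ho⟩
    refine ⟨⟨?_, hm⟩, ho⟩
    exact Nat.Coprime.dvd_of_dvd_mul_left
      (Nat.coprime_two_right.mpr (Nat.odd_iff.mpr (Nat.two_dvd_ne_zero.mp ho))) hd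
  · rintro ⟨⟨hd, h0⟩, ho⟩
    exact ⟨⟨hd.mul_left 2, by positivity⟩, ho⟩

lemma evenCardSelf (m : ℕ) (hm : m ≠ 0) :
    ((Nat.divisors m).filter (fun e => 2 ∣ e)).card
      = if 2 ∣ m then (Nat.divisors (m/2)).card else 0 := by
  by_cases h : 2 ∣ m
  · obtain ⟨k, rfl⟩ := h
    have hk : k ≠ 0 := by rintro rfl; simp at hm
    simp [evenDivCard k hk, Nat.mul_div_cancel_left _ (by norm_num : 0 < 2)]
  · rw [if_neg h]
    rw [Finset.card_eq_zero, Finset.filter_eq_empty_iff]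
    intro e he h2
    rw [Nat.mem_divisors] at he
    exact h (h2.trans he.1)

/-- `d(2m) = 2 d(m) − d(m/2)` (where the last term is present only if `m` is even). -/
lemma dTwoMul (m : ℕ) (hm : m ≠ 0) :
    (Nat.divisors (2*m)).card + (if 2 ∣ m then (Nat.divisors (m/2)).card else 0)
      = 2 * (Nat.divisors m).card := by
  have h1 := Finset.card_filter_add_card_filter_not (s := Nat.divisors (2*m))
    (p := fun e => 2 ∣ e)
  have h2 := Finset.card_filter_add_card_filter_not (s := Nat.divisors m)
    (p := fun e => 2 ∣ e)
  rw [oddDiv m hm, evenDivCard m hm] at h1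
  rw [evenCardSelf m hm] at h2
  omega

/-- Summing over the even members of `Icc 1 N`. -/
lemma sumEven (f : ℕ → ℝ) (N : ℕ) :
    ∑ n ∈ (Finset.Icc 1 N).filter (fun n => 2 ∣ n), f n
      = ∑ m ∈ Finset.Icc 1 (N/2), f (2*m) := by
  apply Finset.sum_nbij' (i := fun n => n / 2) (j := fun m => 2 * m)
  · intro n hn
    simp only [Finset.mem_filter, Finset.mem_Icc] at hn ⊢
    obtain ⟨⟨h1, h2⟩, k, rfl⟩ := hn
    constructor
    · omega
    · exact Nat.div_le_div_right h2
  · intro m hm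
    simp only [Finset.mem_filter, Finset.mem_Icc] at hm ⊢
    refine ⟨⟨by omega, ?_⟩, ⟨m, rfl⟩⟩
    have := (Nat.le_div_iff_mul_le (by norm_num : 0 < 2)).mp hm.2
    omega
  · intro n hn
    simp only [Finset.mem_filter] at hn
    obtain ⟨_, k, rfl⟩ := hn
    omega
  · intro m hm; omega
  · intro n hn
    simp only [Finset.mem_filter] at hn
    obtain ⟨_, k, rfl⟩ := hn
    congr 1; omega

/-- `∑_{m ≤ M} d(2m) + ∑_{k ≤ M/2} d(k) = 2 ∑_{m ≤ M} d(m)`. -/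
lemma lemA (M : ℕ) :
    (∑ m ∈ Finset.Icc 1 M, dd (2*m)) + ∑ k ∈ Finset.Icc 1 (M/2), dd k
      = 2 * ∑ m ∈ Finset.Icc 1 M, dd m := by
  have h1 : ∑ k ∈ Finset.Icc 1 (M/2), dd k
      = ∑ n ∈ (Finset.Icc 1 M).filter (fun n => 2 ∣ n), dd (n/2) := by
    rw [sumEven (fun n => dd (n/2)) M]
    exact Finset.sum_congr rfl (fun m _ => by rw [Nat.mul_div_cancel_left _ (by norm_num : 0 < 2)])
  rw [h1, Finset.sum_filter, ← Finset.sum_add_distrib, Finset.mul_sum]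
  apply Finset.sum_congr rfl
  intro m hm
  have hm0 : m ≠ 0 := by simp only [Finset.mem_Icc] at hm; omega
  have h2 := dTwoMul m hm0
  by_cases h : 2 ∣ m
  · rw [if_pos h] at h2 ⊢
    simp only [dd]
    exact_mod_cast h2
  · rw [if_neg h] at h2 ⊢
    simp only [dd, add_zero]
    exact_mod_cast h2

/-- `∑_{n ≤ N} (−1)ⁿ d(n) = 2 ∑_{m ≤ N/2} d(2m) − ∑_{n ≤ N} d(n)`. -/
lemma lemB (N : ℕ) :
    ∑ n ∈ Finset.Icc 1 N, (-1:ℝ)^n * dd n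
      = 2 * (∑ m ∈ Finset.Icc 1 (N/2), dd (2*m)) - ∑ n ∈ Finset.Icc 1 N, dd n := by
  rw [← sumEven dd N, eq_sub_iff_add_eq, Finset.mul_sum, Finset.sum_filter,
    ← Finset.sum_add_distrib]
  apply Finset.sum_congr rfl
  intro n _
  by_cases h : 2 ∣ n
  · rw [if_pos h, (even_iff_two_dvd.mpr h).neg_one_pow]; ring
  · rw [if_neg h, (Nat.odd_iff.mpr (Nat.two_dvd_ne_zero.mp h)).neg_one_pow]; ring

/-- Arithmetic interpretation of `Δ*`:
`(1/2) ∑_{n ≤ 4x} (−1)ⁿ d(n) = x(log x + 2γ − 1) + Δ*(x)` for `x ≥ 1`. -/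
theorem divisorErrorStar_arithmetic (x : ℝ) (hx : 1 ≤ x) :
    (1 / 2) * ∑ n ∈ Finset.Icc 1 ⌊4 * x⌋₊, (-1 : ℝ) ^ n * ((Nat.divisors n).card : ℝ) =
      x * (Real.log x + 2 * Real.eulerMascheroniConstant - 1) + divisorErrorStar x := by
  have hx0 : (0:ℝ) < x := lt_of_lt_of_le one_pos hx
  have hf42 : ⌊4 * x⌋₊ / 2 = ⌊2 * x⌋₊ := by
    rw [← Nat.floor_div_natCast (4 * x) 2]
    norm_num
    congr 1
    ring
  have hf21 : ⌊2 * x⌋₊ / 2 = ⌊x⌋₊ := by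
    rw [← Nat.floor_div_natCast (2 * x) 2]
    norm_num
  have hsum : ∑ n ∈ Finset.Icc 1 ⌊4 * x⌋₊, (-1 : ℝ) ^ n * ((Nat.divisors n).card : ℝ)
      = 4 * (∑ n ∈ Finset.Icc 1 ⌊2*x⌋₊, dd n) - 2 * (∑ n ∈ Finset.Icc 1 ⌊x⌋₊, dd n)
        - ∑ n ∈ Finset.Icc 1 ⌊4*x⌋₊, dd n := by
    have hB := lemB ⌊4 * x⌋₊
    rw [hf42] at hB
    have hA := lemA ⌊2 * x⌋₊
    rw [hf21] at hA
    simp only [dd] at hB hA ⊢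
    rw [hB]
    linarith
  have hlog2 : Real.log (2 * x) = Real.log 2 + Real.log x :=
    Real.log_mul (by norm_num) (ne_of_gt hx0)
  have hlog4 : Real.log (4 * x) = 2 * Real.log 2 + Real.log x := by
    rw [Real.log_mul (by norm_num) (ne_of_gt hx0),
      show (4:ℝ) = 2^2 by norm_num, Real.log_pow]
    push_cast; ring
  rw [hsum]
  simp only [divisorErrorStar, divisorError, dd, hlog2, hlog4]
  ring
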